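/- Let A and B be complex numbers with |A| < 1 and |B| < 1, and let T be the 4×4 matrix T = [[1, B, A, AB], [conj(B), 1, A·conj(B), A], [conj(A), B·conj(A), 1, B], [conj(B)·conj(A), conj(A), conj(B), 1]] (i.e., T = S1 ⊗ S2 for S1 = [[1,A],[conj(A),1]], S2 = [[1,B],[conj(B),1]]). Then the parameters Γ12 = B, Γ23 = A·conj(B), Γ34 = B, Γ13 = Γ24 = A·√(1−|B|²)/√(1−|A|²|B|²), Γ14 = −A·B, all of modulus at most 1, satisfy the d = 4 parametrization equations for T: T_{k,k+1} = Γ_{k,k+1} for k = 1,2,3; T_{k,k+2} = Γ_{k,k+1}Γ_{k+1,k+2} + d_{k,k+1}·Γ_{k,k+2}·d_{k+1,k+2} for k = 1,2; and T14 = Γ12Γ23Γ34 + d12·Γ13·d23·Γ34 + Γ12·d23·Γ24·d34 − d12·Γ13·conj(Γ23)·Γ24·d34 + d12·d13·Γ14·d24·d34, where d_{kj} = √(1−|Γ_{kj}|²). -/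

import Mathlib

open Matrix

set_option maxHeartbeats 2000000 in
/-- the explicit parameters of the tensor product of two 2×2 positive
matrices with unit diagonal, satisfying the d = 4 parametrization equations. -/
theorem stmt_14 (A B : ℂ) (hA : ‖A‖ < 1) (hB : ‖B‖ < 1)
    (T : Matrix (Fin 4) (Fin 4) ℂ)
    (hT : T = !![1, B, A, A * B;
                 star B, 1, A * star B, A;
                 star A, B * star A, 1, B;
                 star B * star A, star A, star B, 1])
    (Γ12 Γ23 Γ34 Γ13 Γ24 Γ14 : ℂ)
    (h12 : Γ12 = B) (h23 : Γ23 = A * star B) (h34 : Γ34 = B)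
    (h13 : Γ13 = A * (Real.sqrt (1 - ‖B‖ ^ 2) : ℂ) /
        (Real.sqrt (1 - ‖A‖ ^ 2 * ‖B‖ ^ 2) : ℂ))
    (h24 : Γ24 = A * (Real.sqrt (1 - ‖B‖ ^ 2) : ℂ) /
        (Real.sqrt (1 - ‖A‖ ^ 2 * ‖B‖ ^ 2) : ℂ))
    (h14 : Γ14 = -(A * B))
    (d12 d23 d34 d13 d24 : ℝ)
    (hd12 : d12 = Real.sqrt (1 - ‖Γ12‖ ^ 2)) (hd23 : d23 = Real.sqrt (1 - ‖Γ23‖ ^ 2))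
    (hd34 : d34 = Real.sqrt (1 - ‖Γ34‖ ^ 2)) (hd13 : d13 = Real.sqrt (1 - ‖Γ13‖ ^ 2))
    (hd24 : d24 = Real.sqrt (1 - ‖Γ24‖ ^ 2)) :
    (‖Γ12‖ ≤ 1 ∧ ‖Γ23‖ ≤ 1 ∧ ‖Γ34‖ ≤ 1 ∧ ‖Γ13‖ ≤ 1 ∧ ‖Γ24‖ ≤ 1 ∧ ‖Γ14‖ ≤ 1) ∧
    T 0 1 = Γ12 ∧ T 1 2 = Γ23 ∧ T 2 3 = Γ34 ∧
    T 0 2 = Γ12 * Γ23 + (d12 : ℂ) * Γ13 * (d23 : ℂ) ∧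
    T 1 3 = Γ23 * Γ34 + (d23 : ℂ) * Γ24 * (d34 : ℂ) ∧
    T 0 3 = Γ12 * Γ23 * Γ34 + (d12 : ℂ) * Γ13 * (d23 : ℂ) * Γ34 +
        Γ12 * (d23 : ℂ) * Γ24 * (d34 : ℂ) -
        (d12 : ℂ) * Γ13 * star Γ23 * Γ24 * (d34 : ℂ) +
        (d12 : ℂ) * (d13 : ℂ) * Γ14 * (d24 : ℂ) * (d34 : ℂ) := by
  have ha0 : 0 ≤ ‖A‖ := norm_nonneg A
  have hb0 : 0 ≤ ‖B‖ := norm_nonneg B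
  set a := ‖A‖ with haa
  set b := ‖B‖ with hbb
  set s := Real.sqrt (1 - b ^ 2) with hs
  set t := Real.sqrt (1 - a ^ 2 * b ^ 2) with ht
  have hbpos : (0:ℝ) < 1 - b ^ 2 := by nlinarith
  have htpos : (0:ℝ) < 1 - a ^ 2 * b ^ 2 := by nlinarith
  have hs0 : 0 ≤ s := Real.sqrt_nonneg _
  have ht0 : 0 < t := Real.sqrt_pos.mpr htpos
  have hs2 : s ^ 2 = 1 - b ^ 2 := Real.sq_sqrt hbpos.le
  have ht2 : t ^ 2 = 1 - a ^ 2 * b ^ 2 := Real.sq_sqrt htpos.le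
  -- norms
  have hn12 : ‖Γ12‖ = b := by rw [h12]
  have hn34 : ‖Γ34‖ = b := by rw [h34]
  have hn23 : ‖Γ23‖ = a * b := by rw [h23, norm_mul, norm_star]
  have hn14 : ‖Γ14‖ = a * b := by rw [h14, norm_neg, norm_mul]
  have hn13 : ‖Γ13‖ = a * s / t := by
    rw [h13, norm_div, norm_mul, Complex.norm_real, Complex.norm_real,
      Real.norm_eq_abs, Real.norm_eq_abs, abs_of_nonneg hs0, abs_of_nonneg ht0.le]
  have hn24 : ‖Γ24‖ = a * s / t := by
    rw [h24, norm_div, norm_mul, Complex.norm_real, Complex.norm_real,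
      Real.norm_eq_abs, Real.norm_eq_abs, abs_of_nonneg hs0, abs_of_nonneg ht0.le]
  -- d values
  have hd12' : d12 = s := by rw [hd12, hn12]
  have hd34' : d34 = s := by rw [hd34, hn34]
  have hd23' : d23 = t := by rw [hd23, hn23, mul_pow]
  have hd13sq : d13 ^ 2 * t ^ 2 = 1 - a ^ 2 := by
    have h1 : (0:ℝ) ≤ 1 - ‖Γ13‖ ^ 2 := by
      rw [hn13]
      rw [div_pow, sub_nonneg, div_le_one (by positivity)]
      nlinarith
    rw [hd13, Real.sq_sqrt h1, hn13, div_pow, mul_pow, hs2, ht2]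
    field_simp
    ring
  have hd130 : 0 ≤ d13 := by rw [hd13]; exact Real.sqrt_nonneg _
  have hd24eq : d24 = d13 := by rw [hd24, hd13, hn24, hn13]
  -- complex facts
  have hBc : B * star B = ((b ^ 2 : ℝ) : ℂ) := by
    push_cast; exact Complex.mul_conj' B
  have hAc : A * star A = ((a ^ 2 : ℝ) : ℂ) := by
    push_cast; exact Complex.mul_conj' A
  have hsC : ((s:ℂ)) ^ 2 = 1 - ((b^2 : ℝ) : ℂ) := by
    norm_cast
  have htC : ((t:ℂ)) ^ 2 = 1 - ((a^2 : ℝ) : ℂ) * ((b^2 : ℝ) : ℂ) := by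
    push_cast; norm_cast
  have htne : ((t:ℂ)) ≠ 0 := by exact_mod_cast ht0.ne'
  have hd13C : ((d13:ℂ)) ^ 2 * ((t:ℂ)) ^ 2 = 1 - ((a^2:ℝ):ℂ) := by
    norm_cast
  have hBc' : B * (starRingEnd ℂ) B = ((b ^ 2 : ℝ) : ℂ) := by
    push_cast; exact Complex.mul_conj' B
  have hAc' : A * (starRingEnd ℂ) A = ((a ^ 2 : ℝ) : ℂ) := by
    push_cast; exact Complex.mul_conj' A
  subst hT
  refine ⟨⟨?_, ?_, ?_, ?_, ?_, ?_⟩, ?_, ?_, ?_, ?_, ?_, ?_⟩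
  · rw [hn12]; exact hB.le
  · rw [hn23]; nlinarith
  · rw [hn34]; exact hB.le
  · rw [hn13, div_le_one ht0]; nlinarith [Real.sq_sqrt hbpos.le, Real.sq_sqrt htpos.le, Real.sqrt_nonneg (1 - b^2)]
  · rw [hn24, div_le_one ht0]; nlinarith [Real.sq_sqrt hbpos.le, Real.sq_sqrt htpos.le, Real.sqrt_nonneg (1 - b^2)]
  · rw [hn14]; nlinarith
  · simp [h12]
  · simp [h23]
  · simp [h34]
  · show A = Γ12 * Γ23 + (d12 : ℂ) * Γ13 * (d23 : ℂ)
    rw [h12, h23, h13, hd12', hd23']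
    have e2 : (↑s:ℂ) * (A * ↑s / ↑t) * ↑t = A * (↑s:ℂ)^2 := by field_simp
    rw [e2]
    linear_combination (-A) * hBc + (-A) * hsC
  · show A = Γ23 * Γ34 + (d23 : ℂ) * Γ24 * (d34 : ℂ)
    rw [h23, h34, h24, hd23', hd34']
    have e2 : (↑t:ℂ) * (A * ↑s / ↑t) * ↑s = A * (↑s:ℂ)^2 := by field_simp
    rw [e2]
    linear_combination (-A) * hBc + (-A) * hsC
  · show A * B = _
    rw [h12, h23, h34, h13, h24, h14, hd12', hd23', hd34', hd24eq]
    simp only [star_mul', star_star]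
    field_simp
    linear_combination (-(A*B*(t:ℂ)^2)) * hBc + (A*B*(s:ℂ)^4) * hAc +
      (A*B*(s:ℂ)^2) * hd13C +
      (A*B*(-(t:ℂ)^2 + (s:ℂ)^2*((a^2:ℝ):ℂ))) * hsC +
      (-(A*B*(s:ℂ)^2)) * htC
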